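/- arXiv:2203.07704 — 3 statements merged into one kernel-verified Lean document; each statement's English description precedes it below -/
import Mathlib

section
/- Let G be a graph, E* ⊆ E(G) with g_G(E*) = r₀. If G₀ is a 2-connected subgraph of G with |V(G₀)| ≤ r₀ and |E(G₀) ∩ E*| = 1, then |V(G₀)| = r₀ and G₀ is an induced cycle of G of length r₀. -/
open SimpleGraph

attribute [local instance] Classical.propDecidable

universe u
variable {V : Type u}

/-- `H` (on vertex set `V × Fin m`) is an `m`-fold cover of `G`. -/
def IsCover (G : SimpleGraph V) (m : ℕ) (H : SimpleGraph (V × Fin m)) : Prop :=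
  (∀ (u : V) (i j : Fin m), i ≠ j → H.Adj (u, i) (u, j)) ∧
  (∀ (u v : V) (i j : Fin m), u ≠ v → H.Adj (u, i) (v, j) → G.Adj u v) ∧
  (∀ (u v : V) (i j j' : Fin m), u ≠ v → H.Adj (u, i) (v, j) → H.Adj (u, i) (v, j') → j = j')

/-- A full cover: every matching between fibers over an edge is perfect. -/
def IsFullCover (G : SimpleGraph V) (m : ℕ) (H : SimpleGraph (V × Fin m)) : Prop :=
  IsCover G m H ∧ ∀ u v : V, G.Adj u v → ∀ i : Fin m, ∃ j : Fin m, H.Adj (u, i) (v, j)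

/-- Number of ℋ-colorings (independent transversals) of a cover graph `H`. -/
noncomputable def coverCount {m : ℕ} (H : SimpleGraph (V × Fin m)) : ℕ :=
  Nat.card {f : V → Fin m // ∀ u v : V, ¬ H.Adj (u, f u) (v, f v)}

/-- The DP color function. -/
noncomputable def PDP (G : SimpleGraph V) (m : ℕ) : ℕ :=
  sInf {n | ∃ H : SimpleGraph (V × Fin m), IsCover G m H ∧ n = coverCount H}

/-- Number of proper m-colorings, i.e. the chromatic polynomial evaluated at m. -/
noncomputable def properCount (G : SimpleGraph V) (m : ℕ) : ℕ :=
  Nat.card {f : V → Fin m // ∀ u v : V, G.Adj u v → f u ≠ f v}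

/-- Girth of an edge: length of a shortest cycle through `e` (∞ if none). -/
noncomputable def edgeGirth (G : SimpleGraph V) (e : Sym2 V) : ℕ∞ :=
  ⨅ (a : V) (p : G.Walk a a) (_ : p.IsCycle) (_ : e ∈ p.edges), (p.length : ℕ∞)

/-- Girth of an edge set `E₀`: length of a shortest cycle meeting `E₀` in an odd
number of edges (∞ if none). -/
noncomputable def setGirth (G : SimpleGraph V) (E₀ : Set (Sym2 V)) : ℕ∞ :=
  ⨅ (a : V) (p : G.Walk a a) (_ : p.IsCycle)
    (_ : Odd (p.edges.countP (fun e => e ∈ E₀))), (p.length : ℕ∞)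

/-- The canonical cover graph `H_{G,m}`. -/
def canonicalCover (G : SimpleGraph V) (m : ℕ) : SimpleGraph (V × Fin m) where
  Adj x y := (x.1 = y.1 ∧ x.2 ≠ y.2) ∨ (G.Adj x.1 y.1 ∧ x.2 = y.2)
  symm := by
    constructor
    rintro ⟨u, i⟩ ⟨v, j⟩ (⟨h1, h2⟩ | ⟨h1, h2⟩)
    · exact Or.inl ⟨h1.symm, h2.symm⟩
    · exact Or.inr ⟨h1.symm, h2.symm⟩
  loopless := by constructor; rintro ⟨u, i⟩ (⟨h1, h2⟩ | ⟨h1, h2⟩) <;> simp_all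

/-- `D` is an orientation of the edge set `E₀`. -/
def IsOrientation (D : Set (V × V)) (E₀ : Set (Sym2 V)) : Prop :=
  (∀ x ∈ D, s(x.1, x.2) ∈ E₀) ∧
  ∀ u v : V, s(u, v) ∈ E₀ → ((u, v) ∈ D ↔ (v, u) ∉ D)

/-- The directed edges `D` are balanced on the closed walk `p`. -/
noncomputable def BalancedOn {G : SimpleGraph V} (D : Set (V × V)) {a : V}
    (p : G.Walk a a) : Prop :=
  p.darts.countP (fun d => (d.fst, d.snd) ∈ D) =
    p.darts.countP (fun d => (d.snd, d.fst) ∈ D)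

/-- A DP-good graph. -/
def DPGood [Fintype V] (G : SimpleGraph V) : Prop :=
  G.Connected ∧
  ∃ T : SimpleGraph V, T ≤ G ∧ T.IsTree ∧
    ∃ (q : ℕ) (e : Fin q → Sym2 V),
      Function.Injective e ∧
      Set.range e = G.edgeSet \ T.edgeSet ∧
      (∀ i j : Fin q, i ≤ j → edgeGirth G (e i) ≤ edgeGirth G (e j)) ∧
      ∀ i : Fin q, ∃ g : ℕ, Odd g ∧ edgeGirth G (e i) = (g : ℕ∞) ∧
        ∃ (a : V) (C : G.Walk a a), C.IsCycle ∧ e i ∈ C.edges ∧ C.length = g ∧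
          ∀ f ∈ C.edges, f ∈ T.edgeSet ∪ {e j | j ≤ i}



section AuxStatement14

open SimpleGraph Walk

variable {V : Type} [Fintype V] [DecidableEq V] {G : SimpleGraph V}

lemma aux_setGirth_le {Estar : Set (Sym2 V)} {a : V} (p : G.Walk a a) (hc : p.IsCycle)
    (hodd : Odd (p.edges.countP (fun e => e ∈ Estar))) :
    setGirth G Estar ≤ (p.length : ℕ∞) :=
  iInf_le_of_le a <| iInf_le_of_le p <| iInf_le_of_le hc <| iInf_le _ hodd

lemma aux_end_mem_tail {x y : V} (p : G.Walk x y) (hxy : x ≠ y) : y ∈ p.support.tail := by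
  have h := p.end_mem_support
  rw [p.support_eq_cons, List.mem_cons] at h
  exact h.resolve_left (Ne.symm hxy)

lemma aux_base_mem_tail {a : V} (p : G.Walk a a) (hp : ¬ p.Nil) : a ∈ p.support.tail := by
  have h1 : p.support.tail ≠ [] := by
    cases p with
    | nil => simp at hp
    | cons h q => simp
  have h2 := List.getLast_mem h1
  rwa [List.getLast_tail, p.getLast_support] at h2

lemma aux_cycle_split {u v : V} (c : G.Walk u u) (hc : c.IsCycle) (hv : v ∈ c.support)
    (hvu : v ≠ u) :
    (c.takeUntil v hv).IsPath ∧ (c.dropUntil v hv).IsPath := by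
  have hspec := c.take_spec hv
  have htail : c.support.tail
      = (c.takeUntil v hv).support.tail ++ (c.dropUntil v hv).support.tail := by
    conv_lhs => rw [← hspec]
    rw [Walk.tail_support_append]
  have hnd := hc.support_nodup
  rw [htail] at hnd
  have hdisj := List.disjoint_of_nodup_append hnd
  have hu2 : u ∈ (c.dropUntil v hv).support.tail := aux_end_mem_tail _ hvu
  have hv1 : v ∈ (c.takeUntil v hv).support.tail := aux_end_mem_tail _ (Ne.symm hvu)
  constructor
  · rw [Walk.isPath_def, Walk.support_eq_cons, List.nodup_cons]
    exact ⟨fun hmem => (hdisj hmem) hu2, hnd.of_append_left⟩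
  · rw [Walk.isPath_def, Walk.support_eq_cons, List.nodup_cons]
    exact ⟨fun hmem => (hdisj hv1) hmem, hnd.of_append_right⟩

lemma aux_edge_of_length_one {x y : V} (p : G.Walk x y) (h : p.length = 1) :
    s(x, y) ∈ p.edges := by
  cases p with
  | nil => simp at h
  | @cons _ b _ h' q =>
    have h0 : q.length = 0 := by simpa using h
    have hb : b = y := Walk.eq_of_length_eq_zero h0
    subst hb
    simp

lemma aux_reach {G' : G.Subgraph} {y : V} (hy : y ∈ G'.verts)
    (hconn : ((G'.deleteVerts {y}).coe).Connected)
    (f : Sym2 ↥G'.verts) (hf : (⟨y, hy⟩ : ↥G'.verts) ∈ f)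
    (a b : ↥G'.verts) (ha : (a : V) ≠ y) (hb : (b : V) ≠ y) :
    (G'.coe \ SimpleGraph.fromEdgeSet {f}).Reachable a b := by
  have ha' : (a : V) ∈ (G'.deleteVerts {y}).verts := by
    rw [Subgraph.deleteVerts_verts]; exact ⟨a.2, by simpa using ha⟩
  have hb' : (b : V) ∈ (G'.deleteVerts {y}).verts := by
    rw [Subgraph.deleteVerts_verts]; exact ⟨b.2, by simpa using hb⟩
  let φ : (G'.deleteVerts {y}).coe →g (G'.coe \ SimpleGraph.fromEdgeSet {f}) :=
    { toFun := fun z => ⟨z.1, ((Subgraph.deleteVerts_verts ▸ z.2 : z.1 ∈ G'.verts \ {y})).1⟩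
      map_rel' := by
        rintro ⟨z, hz⟩ ⟨t, ht⟩ hzt
        rw [Subgraph.coe_adj, Subgraph.deleteVerts_adj] at hzt
        obtain ⟨hz1, hz2, ht1, ht2, hadj⟩ := hzt
        rw [SimpleGraph.sdiff_adj]
        constructor
        · exact hadj
        · rw [SimpleGraph.fromEdgeSet_adj]
          rintro ⟨hmem, -⟩
          rw [Set.mem_singleton_iff] at hmem
          rw [← hmem, Sym2.mem_iff] at hf
          rcases hf with h | h
          · exact hz2 (by simpa using congrArg Subtype.val h.symm)
          · exact ht2 (by simpa using congrArg Subtype.val h.symm) }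
  obtain ⟨p⟩ := hconn.preconnected ⟨(a : V), ha'⟩ ⟨(b : V), hb'⟩
  exact ⟨p.map φ⟩

lemma aux_no_chord {Estar : Set (Sym2 V)} {r₀ : ℕ} (hr : setGirth G Estar = (r₀ : ℕ∞))
    {a : V} (C : G.Walk a a) (hC : C.IsCycle) (hlen : C.length = r₀)
    (htot : C.edges.countP (fun e => e ∈ Estar) = 1)
    {u v : V} (hu : u ∈ C.support) (hv : v ∈ C.support) (hadj : G.Adj u v)
    (hnc : s(u, v) ∉ C.edges) : False := by
  classical
  have hvu : v ≠ u := hadj.ne'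
  set C1 := C.rotate u hu with hC1def
  have hC1 : C1.IsCycle := hC.rotate hu
  have hperm : List.Perm C1.edges C.edges := (C.rotate_edges u hu).perm
  have hvC1 : v ∈ C1.support := by
    have hv' := hv
    conv at hv' => rw [← C.take_spec hu]
    rw [Walk.mem_support_append_iff] at hv'
    show v ∈ ((C.dropUntil u hu).append (C.takeUntil u hu)).support
    rw [Walk.mem_support_append_iff]
    tauto
  obtain ⟨hP1, hP2⟩ := aux_cycle_split C1 hC1 hvC1 hvu
  set P1 := C1.takeUntil v hvC1 with hP1def
  set P2 := C1.dropUntil v hvC1 with hP2def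
  have hspec : P1.append P2 = C1 := C1.take_spec hvC1
  have hedges : C1.edges = P1.edges ++ P2.edges := by
    conv_lhs => rw [← hspec]
    rw [Walk.edges_append]
  have hlenC1 : C1.length = r₀ := by
    have h1 : C1.edges.length = C.edges.length := hperm.length_eq
    rwa [Walk.length_edges, Walk.length_edges, hlen] at h1
  have hlens : P1.length + P2.length = r₀ := by
    have := congrArg Walk.length hspec
    rwa [Walk.length_append, hlenC1] at this
  have hncC1 : s(u, v) ∉ C1.edges := fun h => hnc (hperm.mem_iff.mp h)
  have hnc1 : s(u, v) ∉ P1.edges := fun h => hncC1 (by rw [hedges]; exact List.mem_append_left _ h)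
  have hnc2 : s(u, v) ∉ P2.edges := fun h => hncC1 (by rw [hedges]; exact List.mem_append_right _ h)
  have hP1l : 2 ≤ P1.length := by
    have h1 : 0 < P1.length := Walk.not_nil_iff_lt_length.mp (Walk.not_nil_of_ne hadj.ne)
    rcases Nat.lt_or_ge P1.length 2 with h | h
    · have : P1.length = 1 := by omega
      exact absurd (aux_edge_of_length_one P1 this) hnc1
    · exact h
  have hP2l : 2 ≤ P2.length := by
    have h1 : 0 < P2.length := Walk.not_nil_iff_lt_length.mp (Walk.not_nil_of_ne hadj.ne')
    rcases Nat.lt_or_ge P2.length 2 with h | h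
    · have : P2.length = 1 := by omega
      have := aux_edge_of_length_one P2 this
      rw [Sym2.eq_swap] at this
      exact absurd this hnc2
    · exact h
  have hcnt : P1.edges.countP (fun e => e ∈ Estar) + P2.edges.countP (fun e => e ∈ Estar) = 1 := by
    have h1 : C1.edges.countP (fun e => e ∈ Estar) = 1 := by
      rw [hperm.countP_eq]; exact htot
    rwa [hedges, List.countP_append] at h1
  -- the generic contradiction for an arc from v to u
  have key : ∀ (A : G.Walk v u), A.IsPath → s(u, v) ∉ A.edges → A.length + 2 ≤ r₀ →
      Odd ((Walk.cons hadj A).edges.countP (fun e => e ∈ Estar)) → False := by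
    intro A hA hnA hlA hodd
    have hcyc : (Walk.cons hadj A).IsCycle := (Walk.cons_isCycle_iff A hadj).mpr ⟨hA, hnA⟩
    have hle := aux_setGirth_le (Walk.cons hadj A) hcyc hodd
    rw [hr] at hle
    have hlen' : (Walk.cons hadj A).length = A.length + 1 := Walk.length_cons _ _
    rw [hlen'] at hle
    have : r₀ ≤ A.length + 1 := by exact_mod_cast hle
    omega
  -- which arc contains the odd count
  rcases Nat.eq_zero_or_pos (P1.edges.countP (fun e => e ∈ Estar)) with h1 | h1
  · -- count is in P2
    have h2 : P2.edges.countP (fun e => e ∈ Estar) = 1 := by omega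
    by_cases hchord : s(u, v) ∈ Estar
    · refine key P1.reverse hP1.reverse ?_ ?_ ?_
      · rw [Walk.edges_reverse, List.mem_reverse]; exact hnc1
      · rw [Walk.length_reverse]; omega
      · rw [Walk.edges_cons, List.countP_cons, Walk.edges_reverse, List.countP_reverse, h1]
        simp [hchord]
    · refine key P2 hP2 hnc2 (by omega) ?_
      rw [Walk.edges_cons, List.countP_cons, h2]
      simp [hchord]
  · have h2 : P1.edges.countP (fun e => e ∈ Estar) = 1 := by omega
    have h3 : P2.edges.countP (fun e => e ∈ Estar) = 0 := by omega
    by_cases hchord : s(u, v) ∈ Estar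
    · refine key P2 hP2 hnc2 (by omega) ?_
      rw [Walk.edges_cons, List.countP_cons, h3]
      simp [hchord]
    · refine key P1.reverse hP1.reverse ?_ ?_ ?_
      · rw [Walk.edges_reverse, List.mem_reverse]; exact hnc1
      · rw [Walk.length_reverse]; omega
      · rw [Walk.edges_cons, List.countP_cons, Walk.edges_reverse, List.countP_reverse, h2]
        simp [hchord]

end AuxStatement14

/-- a 2-connected subgraph with at most `r₀` vertices containing exactly
one edge of `E*` is an induced cycle of `G` of length `r₀ = g_G(E*)`. -/
theorem two_connected_one_edge_is_cycle {V : Type} [Fintype V] [DecidableEq V]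
    (G : SimpleGraph V) (Estar : Set (Sym2 V))
    (r₀ : ℕ) (hr : setGirth G Estar = (r₀ : ℕ∞))
    (G' : G.Subgraph)
    (h2conn : 3 ≤ Nat.card G'.verts ∧ G'.Connected ∧
      ∀ v ∈ G'.verts, ((G'.deleteVerts {v}).coe).Connected)
    (hcard : Nat.card G'.verts ≤ r₀)
    (hone : Nat.card ↥(G'.edgeSet ∩ Estar) = 1) :
    Nat.card G'.verts = r₀ ∧
    (∀ u v : V, u ∈ G'.verts → v ∈ G'.verts → G.Adj u v → G'.Adj u v) ∧
    ∃ (a : V) (p : G.Walk a a), p.IsCycle ∧ p.length = r₀ ∧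
      G'.verts = {x | x ∈ p.support} ∧ G'.edgeSet = {e | e ∈ p.edges} := by
  classical
  obtain ⟨hcard3, hconn, hdel⟩ := h2conn
  have hone' : (G'.edgeSet ∩ Estar).ncard = 1 := by
    rw [← Nat.card_coe_set_eq]; exact hone
  obtain ⟨e, he⟩ := Set.ncard_eq_one.mp hone'
  have heI : e ∈ G'.edgeSet ∩ Estar := by rw [he]; rfl
  obtain ⟨x, y, rfl⟩ : ∃ x y, e = s(x, y) := ⟨e.out.1, e.out.2, (Quot.out_eq e).symm⟩
  have heG : s(x, y) ∈ G'.edgeSet := heI.1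
  have heE : s(x, y) ∈ Estar := heI.2
  have hadjG' : G'.Adj x y := Subgraph.mem_edgeSet.mp heG
  have hx : x ∈ G'.verts := hadjG'.fst_mem
  have hy : y ∈ G'.verts := hadjG'.snd_mem
  have hxy : x ≠ y := hadjG'.ne
  -- a third vertex
  obtain ⟨w, hw, hwx, hwy⟩ : ∃ w ∈ G'.verts, w ≠ x ∧ w ≠ y := by
    by_contra h
    push_neg at h
    have hsub : G'.verts ⊆ {x, y} := by
      intro z hz
      rcases eq_or_ne z x with rfl | hzx
      · exact Set.mem_insert _ _
      · exact Set.mem_insert_iff.mpr (Or.inr (h z hz hzx))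
    have h2 : Nat.card G'.verts ≤ 2 := by
      rw [Nat.card_coe_set_eq]
      calc G'.verts.ncard ≤ ({x, y} : Set V).ncard :=
            Set.ncard_le_ncard hsub (Set.toFinite _)
        _ = 2 := Set.ncard_pair hxy
    omega
  -- a cycle through the special edge in G'.coe
  have hreach : (G'.coe \ SimpleGraph.fromEdgeSet
      {s((⟨x, hx⟩ : ↥G'.verts), (⟨y, hy⟩ : ↥G'.verts))}).Reachable ⟨x, hx⟩ ⟨y, hy⟩ := by
    have h1 := aux_reach hy (hdel y hy) s((⟨x, hx⟩ : ↥G'.verts), (⟨y, hy⟩ : ↥G'.verts))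
      (Sym2.mem_mk_right _ _) ⟨x, hx⟩ ⟨w, hw⟩ hxy hwy
    have h2 := aux_reach hx (hdel x hx) s((⟨x, hx⟩ : ↥G'.verts), (⟨y, hy⟩ : ↥G'.verts))
      (Sym2.mem_mk_left _ _) ⟨w, hw⟩ ⟨y, hy⟩ hwx (Ne.symm hxy)
    exact h1.trans h2
  obtain ⟨u₀, p, hp, hep⟩ := (adj_and_reachable_delete_edges_iff_exists_cycle).mp
    ⟨show G'.coe.Adj ⟨x, hx⟩ ⟨y, hy⟩ from hadjG', hreach⟩
  -- map it to G
  set C : G.Walk (u₀ : V) (u₀ : V) := p.map G'.hom with hCdef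
  have hCc : C.IsCycle := hp.map Subgraph.hom_injective
  have heC : s(x, y) ∈ C.edges := by
    rw [show C.edges = p.edges.map (Sym2.map G'.hom) from Walk.edges_map _ _]
    have := List.mem_map_of_mem (f := Sym2.map ⇑G'.hom) hep
    simpa using this
  have hCsub : ∀ f ∈ C.edges, f ∈ G'.edgeSet := by
    intro f hf
    rw [show C.edges = p.edges.map (Sym2.map G'.hom) from Walk.edges_map _ _, List.mem_map] at hf
    obtain ⟨f', hf', rfl⟩ := hf
    have hf'' := p.edges_subset_edgeSet hf'
    clear hf'
    revert hf''
    refine Sym2.ind (fun a b hab => ?_) f'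
    rw [mem_edgeSet, Subgraph.coe_adj] at hab
    simpa using Subgraph.mem_edgeSet.mpr hab
  have hCsup : ∀ z ∈ C.support, z ∈ G'.verts := by
    intro z hz
    rw [show C.support = p.support.map G'.hom from Walk.support_map _ _, List.mem_map] at hz
    obtain ⟨z', _, rfl⟩ := hz
    exact z'.2
  -- count of Estar edges on C is one
  have hiff : ∀ f ∈ C.edges, f ∈ Estar ↔ f = s(x, y) := by
    intro f hf
    constructor
    · intro hfE
      have hmem : f ∈ G'.edgeSet ∩ Estar := ⟨hCsub f hf, hfE⟩
      rwa [he, Set.mem_singleton_iff] at hmem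
    · rintro rfl; exact heE
  have htot : C.edges.countP (fun e => e ∈ Estar) = 1 := by
    have h1 : C.edges.count s(x, y) = 1 :=
      List.count_eq_one_of_mem hCc.edges_nodup heC
    rw [← h1, List.count_eq_countP]
    refine List.countP_congr ?_
    intro f hf
    simp only [decide_eq_true_eq, beq_iff_eq]
    exact hiff f hf
  -- length bounds
  have hge : r₀ ≤ C.length := by
    have hle := aux_setGirth_le C hCc (htot ▸ odd_one)
    rw [hr] at hle
    exact_mod_cast hle
  have hsupnd := hCc.support_nodup
  have hlsup : C.support.tail.length = C.length := by
    have h2 : C.support.length = C.length + 1 := C.length_support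
    rw [C.support_eq_cons, List.length_cons] at h2
    omega
  have htail_sub : {z | z ∈ C.support.tail} ⊆ G'.verts :=
    fun z hz => hCsup z (List.mem_of_mem_tail hz)
  have hle2 : C.length ≤ Nat.card G'.verts := by
    rw [Nat.card_coe_set_eq]
    calc C.length = C.support.tail.length := hlsup.symm
      _ = C.support.tail.toFinset.card := (List.toFinset_card_of_nodup hsupnd).symm
      _ = ({z | z ∈ C.support.tail} : Set V).ncard := by
          rw [← List.coe_toFinset, Set.ncard_coe_finset]
      _ ≤ G'.verts.ncard := Set.ncard_le_ncard htail_sub (Set.toFinite _)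
  have hlenC : C.length = r₀ := le_antisymm (hle2.trans hcard) hge
  have hcardv : Nat.card G'.verts = r₀ := le_antisymm hcard (hge.trans hle2)
  -- support is all of verts
  have htails : {z | z ∈ C.support.tail} = G'.verts := by
    refine Set.eq_of_subset_of_ncard_le htail_sub ?_ (Set.toFinite _)
    rw [← List.coe_toFinset, Set.ncard_coe_finset, List.toFinset_card_of_nodup hsupnd,
      hlsup, hlenC, ← hcardv, Nat.card_coe_set_eq]
  have hbase : (u₀ : V) ∈ C.support.tail := aux_base_mem_tail C hCc.not_nil
  have hvertseq : G'.verts = {z | z ∈ C.support} := by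
    ext z
    simp only [Set.mem_setOf_eq]
    constructor
    · intro hz
      rw [← htails, Set.mem_setOf_eq] at hz
      exact List.mem_of_mem_tail hz
    · exact fun h => hCsup z h
  -- the key no-chord property
  have hkey : ∀ z t : V, z ∈ C.support → t ∈ C.support → G.Adj z t → s(z, t) ∈ C.edges := by
    intro z t hz ht hadj2
    by_contra hnot
    exact aux_no_chord hr C hCc hlenC htot hz ht hadj2 hnot
  have hmemsup : ∀ z ∈ G'.verts, z ∈ C.support := by
    intro z hz
    rwa [hvertseq, Set.mem_setOf_eq] at hz
  refine ⟨hcardv, ?_, (u₀ : V), C, hCc, hlenC, hvertseq, ?_⟩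
  · intro z t hz ht hadj2
    exact Subgraph.mem_edgeSet.mp
      (hCsub _ (hkey z t (hmemsup z hz) (hmemsup t ht) hadj2))
  · ext f
    simp only [Set.mem_setOf_eq]
    constructor
    · refine Sym2.ind (fun a b hab => ?_) f
      have hadj2 : G'.Adj a b := Subgraph.mem_edgeSet.mp hab
      exact hkey a b (hmemsup a hadj2.fst_mem) (hmemsup b hadj2.snd_mem) (G'.adj_sub hadj2)
    · exact fun hf => hCsub f hf
end

section
/- Let G be a graph on n vertices with E* = {e₁,…,e_k} ⊆ E(G), k ≥ 1, where e_i = u_i v_i. Let ℋ=(L,H) be the m-fold cover with L(x)={(x,i): i∈[m]}, E_H(L(x),L(y))={(x,i)(y,i): i∈[m]} for edges xy ∉ E*, and E_H(L(u_i),L(v_i))={(u_i,q)(v_i,q+1 mod m): q∈[m]} for each e_i ∈ E*. If m > k, then for any cycle C of G with |E(C) ∩ E*| odd, no transversal of {L(v): v ∈ V(C)} induces a copy of C in H. -/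
open SimpleGraph

attribute [local instance] Classical.propDecidable

universe u
variable {V : Type u}

section Aux

variable {α : Type*}

private lemma telescope_aux {W : Type u} {G : SimpleGraph W} {m : ℕ} (g : W → ZMod m) :
    ∀ {x y : W} (w : G.Walk x y),
      (w.darts.map (fun d => g d.toProd.2 - g d.toProd.1)).sum = g y - g x := by
  intro x y w
  induction w with
  | nil => simp
  | cons h w ih => simp [ih]

private lemma sum_bound_parity (P : α → Prop) [DecidablePred P] (ε : α → ℤ) :
    ∀ l : List α,
      (∀ a ∈ l, (P a ∧ (ε a = 1 ∨ ε a = -1)) ∨ (¬ P a ∧ ε a = 0)) →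
      (l.map ε).sum.natAbs ≤ l.countP (fun a => decide (P a)) ∧
        Even ((l.map ε).sum + (l.countP (fun a => decide (P a)) : ℤ)) := by
  intro l
  induction l with
  | nil => simp
  | cons a l ih =>
    intro h
    obtain ⟨h1, h2⟩ := ih (fun b hb => h b (List.mem_cons_of_mem a hb))
    rcases h a (List.mem_cons_self) with ⟨hP, hε⟩ | ⟨hP, hε⟩
    · constructor
      · calc ((ε a + (l.map ε).sum).natAbs) ≤ (ε a).natAbs + (l.map ε).sum.natAbs :=
            Int.natAbs_add_le _ _
          _ ≤ 1 + l.countP (fun a => decide (P a)) := by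
            rcases hε with hε | hε <;> simp [hε] <;> omega
          _ = _ := by simp [List.countP_cons, hP]; omega
      · have : Even (ε a + 1) := by rcases hε with hε | hε <;> simp [hε]
        have := this.add h2
        simp only [List.map_cons, List.sum_cons, List.countP_cons, hP, decide_true,
          if_pos]
        convert this using 1
        · rfl
        push_cast
        ring
    · simp only [List.map_cons, List.sum_cons, List.countP_cons, hP, hε]
      simpa using ⟨h1, h2⟩

end Aux

/-- in the shifted cover, when `m > k = |E*|`, no transversal induces a
copy of a cycle meeting `E*` in an odd number of edges. -/
theorem no_copy_of_odd_cycle_in_shift_cover {V : Type} [Fintype V] [DecidableEq V]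
    (G : SimpleGraph V) (m : ℕ) [NeZero m]
    (Estar : Set (Sym2 V)) (hE : Estar ⊆ G.edgeSet)
    (D : Set (V × V)) (hD : IsOrientation D Estar)
    (k : ℕ) (hk : Nat.card ↥Estar = k) (hm : k < m)
    (H : SimpleGraph (V × Fin m))
    (hH : ∀ (x y : V) (i j : Fin m), H.Adj (x, i) (y, j) ↔
      ((x = y ∧ i ≠ j) ∨ (G.Adj x y ∧ s(x, y) ∉ Estar ∧ i = j) ∨
       ((x, y) ∈ D ∧ j = i + 1) ∨ ((y, x) ∈ D ∧ i = j + 1)))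
    (a : V) (p : G.Walk a a) (hp : p.IsCycle)
    (hodd : Odd (p.edges.countP (fun e => e ∈ Estar))) :
    ¬ ∃ f : V → Fin m, ∀ u v : V, s(u, v) ∈ p.edges → H.Adj (u, f u) (v, f v) := by
  rintro ⟨f, hf⟩
  set g : V → ZMod m := fun v => (((f v : Fin m) : ℕ) : ZMod m) with hgdef
  have hstep : ∀ u v : V, f v = f u + 1 → g v = g u + 1 := by
    intro u v huv
    simp only [hgdef, huv, Fin.add_def]
    rw [ZMod.natCast_mod]
    push_cast
    rw [Fin.val_one', ZMod.natCast_mod]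
    simp
  -- classification of darts
  have key : ∀ d ∈ p.darts,
      (d.edge ∈ Estar ∧ (f d.toProd.2 = f d.toProd.1 + 1 ∨ f d.toProd.1 = f d.toProd.2 + 1))
      ∨ (d.edge ∉ Estar ∧ f d.toProd.1 = f d.toProd.2) := by
    intro d hd
    have hedge : d.edge ∈ p.edges := by
      rw [SimpleGraph.Walk.edges]; exact List.mem_map_of_mem hd
    have hne : d.toProd.1 ≠ d.toProd.2 := d.adj.ne
    have hde : d.edge = s(d.toProd.1, d.toProd.2) := rfl
    have hadj := hf d.toProd.1 d.toProd.2 (by rwa [hde] at hedge)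
    rw [hH] at hadj
    rcases hadj with ⟨h1, _⟩ | ⟨_, h2, h3⟩ | ⟨h1, h2⟩ | ⟨h1, h2⟩
    · exact absurd h1 hne
    · exact Or.inr ⟨by rwa [hde], h3⟩
    · exact Or.inl ⟨by rw [hde]; exact hD.1 _ h1, Or.inl h2⟩
    · refine Or.inl ⟨?_, Or.inr h2⟩
      have := hD.1 _ h1
      rwa [hde, Sym2.eq_swap]
  classical
  set ε : G.Dart → ℤ := fun d =>
    if d.edge ∈ Estar then (if f d.toProd.2 = f d.toProd.1 + 1 then 1 else -1) else 0 with hεdef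
  have hεspec : ∀ d ∈ p.darts,
      ((d.edge ∈ Estar) ∧ (ε d = 1 ∨ ε d = -1)) ∨ ((d.edge ∉ Estar) ∧ ε d = 0) := by
    intro d hd
    rcases key d hd with ⟨h1, _⟩ | ⟨h1, _⟩
    · refine Or.inl ⟨h1, ?_⟩
      simp only [hεdef, if_pos h1]
      split <;> simp
    · exact Or.inr ⟨h1, by simp [hεdef, h1]⟩
  have hcast : ∀ d ∈ p.darts, ((ε d : ℤ) : ZMod m) = g d.toProd.2 - g d.toProd.1 := by
    intro d hd
    rcases key d hd with ⟨h1, h2 | h2⟩ | ⟨h1, h2⟩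
    · rw [hstep _ _ h2]
      simp [hεdef, h1, h2]
    · by_cases hc : f d.toProd.2 = f d.toProd.1 + 1
      · rw [hstep _ _ hc]
        simp [hεdef, h1, hc]
      · rw [hstep _ _ h2]
        simp only [hεdef, if_pos h1, if_neg hc]
        push_cast
        ring
    · simp [hεdef, hgdef, h1, h2]
  -- telescoping sum
  have htel := telescope_aux (G := G) g p
  have hsum0 : (((p.darts.map ε).sum : ℤ) : ZMod m) = 0 := by
    have : ((p.darts.map ε).sum : ZMod m) = (p.darts.map (fun d => g d.toProd.2 - g d.toProd.1)).sum := by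
      rw [Int.cast_list_sum, List.map_map]
      exact congrArg List.sum (List.map_congr_left hcast)
    rw [this, htel, sub_self]
  set S : ℤ := (p.darts.map ε).sum with hS
  have hdvd : (m : ℤ) ∣ S := by
    rwa [ZMod.intCast_zmod_eq_zero_iff_dvd] at hsum0
  -- bound and parity
  obtain ⟨hbound, hpar⟩ := sum_bound_parity (fun d : G.Dart => d.edge ∈ Estar) ε p.darts hεspec
  have hcount : p.darts.countP (fun d => decide (d.edge ∈ Estar)) =
      p.edges.countP (fun e => e ∈ Estar) := by
    rw [SimpleGraph.Walk.edges, List.countP_map]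
    rfl
  set t : ℕ := p.edges.countP (fun e => e ∈ Estar) with ht
  rw [hcount] at hbound hpar
  -- t ≤ k
  have htk : t ≤ k := by
    have hnodup : (p.edges.filter (fun e => decide (e ∈ Estar))).Nodup :=
      hp.edges_nodup.filter _
    have hlen : t = (p.edges.filter (fun e => decide (e ∈ Estar))).length := by
      rw [ht, List.countP_eq_length_filter]
    have hsub : ((p.edges.filter (fun e => decide (e ∈ Estar))).toFinset : Set (Sym2 V)) ⊆ Estar := by
      intro e he
      simp only [Finset.coe_sort_coe, List.coe_toFinset, Set.mem_setOf_eq, List.mem_filter] at he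
      exact of_decide_eq_true he.2
    calc t = (p.edges.filter (fun e => decide (e ∈ Estar))).toFinset.card := by
          rw [hlen, List.toFinset_card_of_nodup hnodup]
      _ = Set.ncard ((p.edges.filter (fun e => decide (e ∈ Estar))).toFinset : Set (Sym2 V)) := by
          rw [Set.ncard_coe_finset]
      _ ≤ Set.ncard Estar := Set.ncard_le_ncard hsub (Set.toFinite _)
      _ = k := by rw [← hk, Nat.card_coe_set_eq]
  -- conclude
  rw [← hS] at hpar hbound
  have hSne : S ≠ 0 := by
    intro h0
    rw [h0, zero_add] at hpar
    exact (Nat.not_even_iff_odd.mpr hodd) (by exact_mod_cast hpar)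
  have h2 : (m : ℤ) ≤ |S| := Int.le_of_dvd (abs_pos.mpr hSne) ((dvd_abs _ _).mpr hdvd)
  have h3 : (m : ℤ) ≤ (S.natAbs : ℤ) := by rwa [Int.abs_eq_natAbs] at h2
  have h4 : m ≤ S.natAbs := by exact_mod_cast h3
  omega
end

section
/- Let C be a cycle with an assignment of a direction to each edge in a subset E* ⊆ E(C), and suppose each directed edge goes from a vertex of V₁ to a vertex of V₂ for disjoint vertex sets V₁,V₂. If |E(C) ∩ E*| is even and no component of C − (E* ∩ E(C)) is a path from a vertex of V₁ to a vertex of V₂, then the directed edges of E* are balanced on C, i.e., exactly half of the edges of E(C) ∩ E* are oriented clockwise along C. -/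
open SimpleGraph

attribute [local instance] Classical.propDecidable

universe u
variable {V : Type u}

private lemma countP_quad {α : Type u} (P Q R S : α → Bool) (l : List α)
    (h : ∀ x ∈ l, (if P x then 1 else 0) + (if S x then 1 else 0)
        = (if Q x then 1 else 0) + (if R x then 1 else 0)) :
    l.countP P + l.countP S = l.countP Q + l.countP R := by
  induction l with
  | nil => simp
  | cons a t ih =>
    have h1 := h a List.mem_cons_self
    have h2 := ih fun x hx => h x (List.mem_cons_of_mem a hx)
    simp only [List.countP_cons]
    omega

/-- directed edges from `V₁` to `V₂` on a cycle are balanced when their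
number is even and no component of the cycle minus `E*` is a `V₁`–`V₂` path. -/
theorem balanced_of_no_component_path {V : Type} [DecidableEq V]
    (G : SimpleGraph V) (V₁ V₂ : Set V) (hdisj : Disjoint V₁ V₂)
    (Estar : Set (Sym2 V)) (D : Set (V × V)) (hD : IsOrientation D Estar)
    (hDdir : ∀ x ∈ D, x.1 ∈ V₁ ∧ x.2 ∈ V₂)
    (a : V) (p : G.Walk a a) (hp : p.IsCycle)
    (hEsub : ∀ e ∈ Estar, e ∈ p.edges)
    (heven : Even (p.edges.countP (fun e => e ∈ Estar)))
    (hnopath : ¬ ∃ v₁ v₂ : V, v₁ ∈ V₁ ∧ v₂ ∈ V₂ ∧ ∃ q : G.Walk v₁ v₂, q.IsPath ∧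
      (∀ e ∈ q.edges, e ∈ p.edges ∧ e ∉ Estar) ∧
      (∃ e₁ ∈ p.edges, e₁ ∈ Estar ∧ v₁ ∈ e₁) ∧
      (∃ e₂ ∈ p.edges, e₂ ∈ Estar ∧ v₂ ∈ e₂)) :
    BalancedOn D p := by
  classical
  -- The graph of edges of `p` not in `Estar`.
  let G' : SimpleGraph V :=
    { Adj := fun u v => G.Adj u v ∧ s(u, v) ∈ p.edges ∧ s(u, v) ∉ Estar
      symm := by
        constructor
        intro u v h
        exact ⟨h.1.symm, by rw [Sym2.eq_swap]; exact h.2.1, by rw [Sym2.eq_swap]; exact h.2.2⟩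
      loopless := ⟨fun u h => G.loopless.irrefl u h.1⟩ }
  have hG'le : G' ≤ G := fun u v h => h.1
  have hG'edge : ∀ e ∈ G'.edgeSet, e ∈ p.edges ∧ e ∉ Estar := by
    intro e
    induction e using Sym2.ind with
    | _ u v => exact fun h => h.2
  -- The set of vertices reachable (avoiding Estar, within p) to a V₂ endpoint of
  -- an Estar edge.
  let A : Set V := {v | ∃ w, w ∈ V₂ ∧ (∃ e ∈ p.edges, e ∈ Estar ∧ w ∈ e) ∧ G'.Reachable v w}
  -- A V₁ endpoint of an Estar edge of p is not in A.
  have hV1 : ∀ v ∈ V₁, (∃ e ∈ p.edges, e ∈ Estar ∧ v ∈ e) → v ∉ A := by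
    rintro v hv hev ⟨w, hw, hew, hr⟩
    apply hnopath
    obtain ⟨r⟩ := hr
    refine ⟨v, w, hv, hw, (r.toPath : G'.Walk v w).mapLe hG'le,
      (r.toPath.2).mapLe hG'le, ?_, hev, hew⟩
    intro e he
    have : e ∈ (r.toPath : G'.Walk v w).edges := by
      have := he
      rwa [SimpleGraph.Walk.mapLe, SimpleGraph.Walk.edges_map,
        show Sym2.map (SimpleGraph.Hom.ofLE hG'le) = Sym2.map _root_.id from rfl,
        Sym2.map_id, List.map_id] at this
    exact hG'edge e ((r.toPath : G'.Walk v w).edges_subset_edgeSet this)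
  -- A V₂ endpoint of an Estar edge of p is in A.
  have hV2 : ∀ v ∈ V₂, (∃ e ∈ p.edges, e ∈ Estar ∧ v ∈ e) → v ∈ A := by
    intro v hv hev
    exact ⟨v, hv, hev, SimpleGraph.Reachable.refl v⟩
  -- A is closed under G'-adjacency.
  have hAadj : ∀ u v : V, G'.Adj u v → (u ∈ A ↔ v ∈ A) := by
    intro u v huv
    constructor <;> rintro ⟨w, hw, hew, hr⟩
    · exact ⟨w, hw, hew, (huv.symm.reachable).trans hr⟩
    · exact ⟨w, hw, hew, (huv.reachable).trans hr⟩
  -- Per-dart analysis.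
  have key : ∀ d ∈ p.darts,
      (if (d.fst ∈ A : Prop) then 1 else 0) + (if ((d.fst, d.snd) ∈ D : Prop) then 1 else 0)
      = (if (d.snd ∈ A : Prop) then 1 else 0) + (if ((d.snd, d.fst) ∈ D : Prop) then 1 else 0) := by
    intro d hd
    have hadj : G.Adj d.fst d.snd := d.adj
    have hedge : s(d.fst, d.snd) ∈ p.edges := by
      have : d.edge ∈ p.edges := List.mem_map_of_mem hd
      simpa [SimpleGraph.Dart.edge] using this
    by_cases hfwd : (d.fst, d.snd) ∈ D
    · have hEs : s(d.fst, d.snd) ∈ Estar := hD.1 (d.fst, d.snd) hfwd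
      have hdir := hDdir (d.fst, d.snd) hfwd
      have hbwd : (d.snd, d.fst) ∉ D := (hD.2 d.fst d.snd hEs).mp hfwd
      have h1 : d.fst ∉ A := hV1 d.fst hdir.1
        ⟨s(d.fst, d.snd), hedge, hEs, Sym2.mem_mk_left _ _⟩
      have h2 : d.snd ∈ A := hV2 d.snd hdir.2
        ⟨s(d.fst, d.snd), hedge, hEs, Sym2.mem_mk_right _ _⟩
      simp [hfwd, hbwd, h1, h2]
    · by_cases hbwd : (d.snd, d.fst) ∈ D
      · have hEs : s(d.fst, d.snd) ∈ Estar := by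
          have := hD.1 (d.snd, d.fst) hbwd
          rwa [Sym2.eq_swap] at this
        have hdir := hDdir (d.snd, d.fst) hbwd
        have h1 : d.fst ∈ A := hV2 d.fst hdir.2
          ⟨s(d.fst, d.snd), hedge, hEs, Sym2.mem_mk_left _ _⟩
        have h2 : d.snd ∉ A := hV1 d.snd hdir.1
          ⟨s(d.fst, d.snd), hedge, hEs, Sym2.mem_mk_right _ _⟩
        simp [hfwd, hbwd, h1, h2]
      · have hEs : s(d.fst, d.snd) ∉ Estar := by
          intro hEs
          exact hfwd ((hD.2 d.fst d.snd hEs).mpr hbwd)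
        have hiff : d.fst ∈ A ↔ d.snd ∈ A := hAadj _ _ ⟨hadj, hedge, hEs⟩
        by_cases h1 : d.fst ∈ A
        · simp [hfwd, hbwd, h1, hiff.mp h1]
        · have h2 : d.snd ∉ A := fun h => h1 (hiff.mpr h)
          simp [hfwd, hbwd, h1, h2]
  -- Counting.
  have hquad := countP_quad (fun d : G.Dart => decide (d.fst ∈ A))
    (fun d : G.Dart => decide (d.snd ∈ A))
    (fun d : G.Dart => decide ((d.snd, d.fst) ∈ D))
    (fun d : G.Dart => decide ((d.fst, d.snd) ∈ D)) p.darts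
    (by intro d hd; simpa using key d hd)
  -- Telescoping: counts of fst-in-A and snd-in-A agree on a closed walk.
  have htel : p.darts.countP (fun d => decide (d.fst ∈ A))
      = p.darts.countP (fun d => decide (d.snd ∈ A)) := by
    have hfst : p.darts.countP (fun d => decide (d.fst ∈ A))
        = p.support.dropLast.countP (fun v => decide (v ∈ A)) := by
      rw [← p.map_fst_darts, List.countP_map]; rfl
    have hsnd : p.darts.countP (fun d => decide (d.snd ∈ A))
        = p.support.tail.countP (fun v => decide (v ∈ A)) := by
      rw [← p.map_snd_darts, List.countP_map]; rfl
    have hne : p.support ≠ [] := p.support_ne_nil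
    have hsplit1 : p.support.countP (fun v => decide (v ∈ A))
        = p.support.dropLast.countP (fun v => decide (v ∈ A))
          + (if a ∈ A then 1 else 0) := by
      conv_lhs => rw [← List.dropLast_append_getLast hne]
      rw [List.countP_append, p.getLast_support]
      simp [List.countP_singleton]
    have hsplit2 : p.support.countP (fun v => decide (v ∈ A))
        = (if a ∈ A then 1 else 0)
          + p.support.tail.countP (fun v => decide (v ∈ A)) := by
      conv_lhs => rw [p.support_eq_cons]
      rw [List.countP_cons]
      simp only [decide_eq_true_eq]
      omega
    rw [hfst, hsnd]
    omega
  unfold BalancedOn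
  omega
end
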